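/- Let x = (θ1,θ2,κ0,κ1,κ∞,p1,p2,q1,q2) be a (T1,T3) Garnier lattice (so θ1(l,m) = θ1(0,0)+l and κ0(l,m) = κ0(0,0)+m for all (l,m)). Then: (a) if θ1(l,m) ≠ 0 for all (l,m), the function u(l,m) = p1(l,m)·q1(l,m)/θ1(l,m) − 1 satisfies the discrete Volterra equation in product form; (b) if κ0(l,m) ≠ 0 for all (l,m), the function u(l,m) = p1(m,l)·( t1·q2(m,l) + t2·q1(m,l) − t1·t2 ) / ( κ0(m,l)·t2 ) − 1 satisfies the discrete Volterra equation in product form. -/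

import Mathlib

/-- The data of the Garnier system in two variables at one lattice site:
parameters `th1, th2, k0, k1, kinf` (i.e. θ₁, θ₂, κ₀, κ₁, κ∞) and variables
`p1, p2, q1, q2`. -/
structure GarnierState where
  th1 : ℂ
  th2 : ℂ
  k0 : ℂ
  k1 : ℂ
  kinf : ℂ
  p1 : ℂ
  p2 : ℂ
  q1 : ℂ
  q2 : ℂ

namespace Garnier

noncomputable def gam (x : GarnierState) : ℂ :=
  -(x.th1 + x.th2 + x.k0 + x.k1 + x.kinf - 1) / 2

def f1 (x : GarnierState) : ℂ := x.p1 * x.q1 - x.th1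

def f2 (x : GarnierState) : ℂ := x.p2 * x.q2 - x.th2

noncomputable def f3 (x : GarnierState) : ℂ := x.p1 * x.q1 + x.p2 * x.q2 + gam x

def f4 (t1 t2 : ℂ) (x : GarnierState) : ℂ :=
  x.q1 * x.q2 - (x.q1 - t1) * (x.q2 - t2)

noncomputable def f5 (t1 t2 : ℂ) (x : GarnierState) : ℂ :=
  (f3 x * f4 t1 t2 x - x.k0 * t1 * t2) *
    (f3 x * f4 t1 t2 x + x.kinf * f4 t1 t2 x - x.k0 * t1 * t2)

/-- The Bäcklund transformation `T1` of the Garnier system in two variables, as a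
step relation between states (including nonvanishing of all denominators
occurring in the step formulas). -/
noncomputable def T1Step (t1 t2 : ℂ) (x y : GarnierState) : Prop :=
  y.th1 = x.th1 + 1 ∧ y.th2 = x.th2 ∧ y.k0 = x.k0 ∧ y.k1 = 1 - x.k1 ∧
  y.kinf = x.kinf ∧
  x.q1 ≠ 0 ∧ f1 x ≠ 0 ∧ t1 * f1 x - t2 * x.p2 * x.q1 ≠ 0 ∧ y.p1 ≠ 0 ∧
  y.p1 = (x.q1 * f3 x - t1 * f1 x) * (x.q1 * f3 x - t1 * f1 x + x.kinf * x.q1) /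
    ((1 - t1) * t1 * x.q1 * f1 x) ∧
  y.p2 = t1 * (f1 x - x.p2 * x.q1) * y.p1 / (t1 * f1 x - t2 * x.p2 * x.q1) ∧
  y.q2 = (t2 * x.p2 * x.q1 - t1 * f1 x) * (t1 * x.q2 * f1 x - t2 * x.q1 * f2 x) /
    ((t1 - t2) * t1 * y.p1 * x.q1 * f1 x) ∧
  y.q1 = (x.k0 * t2 * x.q1 - f1 x * f4 t1 t2 x) / (t2 * y.p1 * x.q1)
    - t1 * y.q2 / t2 + t1

/-- The Bäcklund transformation `T2` of the Garnier system in two variables, as a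
step relation between states (including nonvanishing of all denominators
occurring in the step formulas). -/
noncomputable def T2Step (t1 t2 : ℂ) (x y : GarnierState) : Prop :=
  y.th1 = x.th1 ∧ y.th2 = x.th2 + 1 ∧ y.k0 = x.k0 ∧ y.k1 = 1 - x.k1 ∧
  y.kinf = x.kinf ∧
  x.q2 ≠ 0 ∧ f2 x ≠ 0 ∧ t2 * f2 x - t1 * x.p1 * x.q2 ≠ 0 ∧ y.p2 ≠ 0 ∧
  y.p2 = (x.q2 * f3 x - t2 * f2 x) * (x.q2 * f3 x - t2 * f2 x + x.kinf * x.q2) /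
    ((1 - t2) * t2 * x.q2 * f2 x) ∧
  y.p1 = t2 * (f2 x - x.p1 * x.q2) * y.p2 / (t2 * f2 x - t1 * x.p1 * x.q2) ∧
  y.q1 = (t1 * x.p1 * x.q2 - t2 * f2 x) * (t1 * x.q2 * f1 x - t2 * x.q1 * f2 x) /
    ((t1 - t2) * t2 * y.p2 * x.q2 * f2 x) ∧
  y.q2 = (x.k0 * t1 * x.q2 - f2 x * f4 t1 t2 x) / (t1 * y.p2 * x.q2)
    - t2 * y.q1 / t1 + t2

/-- The Bäcklund transformation `T3` of the Garnier system in two variables, as a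
step relation between states (including nonvanishing of all denominators
occurring in the step formulas). -/
noncomputable def T3Step (t1 t2 : ℂ) (x y : GarnierState) : Prop :=
  y.th1 = x.th1 ∧ y.th2 = x.th2 ∧ y.k0 = x.k0 + 1 ∧ y.k1 = 1 - x.k1 ∧
  y.kinf = x.kinf ∧
  f4 t1 t2 x ≠ 0 ∧ x.k0 * t2 - x.p1 * f4 t1 t2 x ≠ 0 ∧
  x.k0 * t1 - x.p2 * f4 t1 t2 x ≠ 0 ∧ f5 t1 t2 x ≠ 0 ∧
  y.p1 = f5 t1 t2 x / (t1 * (x.k0 * t2 - x.p1 * f4 t1 t2 x) * f4 t1 t2 x) ∧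
  y.p2 = f5 t1 t2 x / (t2 * (x.k0 * t1 - x.p2 * f4 t1 t2 x) * f4 t1 t2 x) ∧
  y.q1 = t1 * (x.k0 * t2 - x.p1 * f4 t1 t2 x) * (x.k0 * t2 * x.q1 - f1 x * f4 t1 t2 x) /
    f5 t1 t2 x ∧
  y.q2 = t2 * (x.k0 * t1 - x.p2 * f4 t1 t2 x) * (x.k0 * t1 * x.q2 - f2 x * f4 t1 t2 x) /
    f5 t1 t2 x

end Garnier

namespace Garnier

lemma f4_lin (t1 t2 : ℂ) (x : GarnierState) :
    f4 t1 t2 x = t2 * x.q1 + t1 * x.q2 - t1 * t2 := by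
  simp only [f4]; ring

/-- Key one-step identity for `T1`: `p1' * f4' * q1 = k0*t2*q1 - f1*f4`. -/
lemma T1_magic (t1 t2 : ℂ) (ht2 : t2 ≠ 0) {x w : GarnierState}
    (h : T1Step t1 t2 x w) :
    w.p1 * f4 t1 t2 w * x.q1 = x.k0 * t2 * x.q1 - f1 x * f4 t1 t2 x := by
  obtain ⟨-, -, -, -, -, hq1ne, -, -, hp1ne, -, -, -, hq1'⟩ := h
  rw [f4_lin t1 t2 w, hq1']
  field_simp
  ring

/-- Key one-step identity for `T3`: `p1' * q1' * f4 = k0*t2*q1 - f1*f4`. -/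
lemma T3_prod (t1 t2 : ℂ) (ht1 : t1 ≠ 0) {x y : GarnierState}
    (h : T3Step t1 t2 x y) :
    y.p1 * y.q1 * f4 t1 t2 x = x.k0 * t2 * x.q1 - f1 x * f4 t1 t2 x := by
  obtain ⟨-, -, -, -, -, hf4, ha1, -, hf5, hp1, -, hq1, -⟩ := h
  rw [hp1, hq1]
  field_simp

/-- Key one-step identity for `T3`: `f1' * f4 = q1 * (k0*t2 - p1*f4)`. -/
lemma T3_f1 (t1 t2 : ℂ) (ht1 : t1 ≠ 0) {x y : GarnierState}
    (h : T3Step t1 t2 x y) :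
    f1 y * f4 t1 t2 x = x.q1 * (x.k0 * t2 - x.p1 * f4 t1 t2 x) := by
  have hp := T3_prod t1 t2 ht1 h
  have hth : y.th1 = x.th1 := h.1
  simp only [f1] at hp ⊢
  rw [hth]
  simp only [f4] at hp ⊢
  linear_combination hp

end Garnier


/-- Special solutions of the discrete Volterra equation (product form) from a
(T1,T3) Garnier lattice. -/
theorem dVolterra_solutions_from_Garnier_T1T3_lattice
    (t1 t2 : ℂ) (ht10 : t1 ≠ 0) (ht11 : t1 ≠ 1) (ht20 : t2 ≠ 0) (ht21 : t2 ≠ 1)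
    (ht12 : t1 ≠ t2)
    (x : ℤ → ℤ → GarnierState)
    (hT1 : ∀ l m : ℤ, Garnier.T1Step t1 t2 (x l m) (x (l+1) m))
    (hT3 : ∀ l m : ℤ, Garnier.T3Step t1 t2 (x l m) (x l (m+1))) :
    ((∀ l m : ℤ, (x l m).th1 ≠ 0) →
      ∀ u : ℤ → ℤ → ℂ,
        (∀ l m : ℤ, u l m = (x l m).p1 * (x l m).q1 / (x l m).th1 - 1) →
        ∀ l m : ℤ, u (l+1) (m+1) * (1 + u l (m+1)) = u l m * (1 + u (l+1) m)) ∧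
    ((∀ l m : ℤ, (x l m).k0 ≠ 0) →
      ∀ u : ℤ → ℤ → ℂ,
        (∀ l m : ℤ, u l m =
          (x m l).p1 * (t1 * (x m l).q2 + t2 * (x m l).q1 - t1 * t2) /
            ((x m l).k0 * t2) - 1) →
        ∀ l m : ℤ, u (l+1) (m+1) * (1 + u l (m+1)) = u l m * (1 + u (l+1) m)) := by
  constructor
  · -- part (a)
    intro hth u hu l m
    have h10 := hT1 l m
    have h01 := hT3 l m
    have h11 := hT3 (l+1) m
    have e1 : (x l (m+1)).th1 = (x l m).th1 := h01.1
    have e2 : (x (l+1) m).th1 = (x l m).th1 + 1 := h10.1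
    have e3 : (x (l+1) (m+1)).th1 = (x l m).th1 + 1 := by rw [h11.1, e2]
    have hT : (x l m).th1 ≠ 0 := hth l m
    have hT1ne : (x l m).th1 + 1 ≠ 0 := e2 ▸ hth (l+1) m
    have hf4w : Garnier.f4 t1 t2 (x (l+1) m) ≠ 0 := h11.2.2.2.2.2.1
    have hF4 : Garnier.f4 t1 t2 (x l m) ≠ 0 := h01.2.2.2.2.2.1
    have hq1 : (x l m).q1 ≠ 0 := h10.2.2.2.2.2.1
    have hu2 := Garnier.T1_magic t1 t2 ht20 h10
    have hu1 := Garnier.T3_f1 t1 t2 ht10 h11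
    have hu3 := Garnier.T3_prod t1 t2 ht10 h01
    have ek0 : (x (l+1) m).k0 = (x l m).k0 := h10.2.2.1
    rw [ek0] at hu1
    have key : ((x (l+1) (m+1)).p1 * (x (l+1) (m+1)).q1 - ((x l m).th1 + 1)) *
        ((x l (m+1)).p1 * (x l (m+1)).q1) =
        ((x l m).p1 * (x l m).q1 - (x l m).th1) *
        ((x (l+1) m).p1 * (x (l+1) m).q1) := by
      have hc : Garnier.f4 t1 t2 (x (l+1) m) * Garnier.f4 t1 t2 (x l m) * (x l m).q1 ≠ 0 :=
        mul_ne_zero (mul_ne_zero hf4w hF4) hq1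
      apply mul_right_cancel₀ hc
      have hf1v : Garnier.f1 (x (l+1) (m+1)) =
          (x (l+1) (m+1)).p1 * (x (l+1) (m+1)).q1 - ((x l m).th1 + 1) := by
        simp only [Garnier.f1]; rw [e3]
      rw [hf1v] at hu1
      simp only [Garnier.f1] at hu2 hu3
      linear_combination
        ((x l (m+1)).p1 * (x l (m+1)).q1 * Garnier.f4 t1 t2 (x l m) * (x l m).q1) * hu1
        - ((x (l+1) m).q1 * Garnier.f4 t1 t2 (x l m) *
            ((x l (m+1)).p1 * (x l (m+1)).q1 +
              ((x l m).p1 * (x l m).q1 - (x l m).th1))) * hu2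
        + ((x (l+1) m).q1 * Garnier.f4 t1 t2 (x l m) *
            ((x l m).p1 * (x l m).q1 - (x l m).th1)) * hu3
    simp only [hu]
    rw [e1, e2, e3]
    field_simp
    linear_combination key
  · -- part (b)
    intro hk u hu l m
    have h10 := hT1 m l
    have h01 := hT3 m l
    have h11 := hT1 m (l+1)
    have e1 : (x (m+1) l).k0 = (x m l).k0 := h10.2.2.1
    have e2 : (x m (l+1)).k0 = (x m l).k0 + 1 := h01.2.2.1
    have e3 : (x (m+1) (l+1)).k0 = (x m l).k0 + 1 := by rw [h11.2.2.1, e2]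
    have hK : (x m l).k0 ≠ 0 := hk m l
    have hK1 : (x m l).k0 + 1 ≠ 0 := e2 ▸ hk m (l+1)
    have hq1y : (x m (l+1)).q1 ≠ 0 := h11.2.2.2.2.2.1
    have hF4 : Garnier.f4 t1 t2 (x m l) ≠ 0 := h01.2.2.2.2.2.1
    have hq1 : (x m l).q1 ≠ 0 := h10.2.2.2.2.2.1
    have h2 := Garnier.T1_magic t1 t2 ht20 h10
    have h4 := Garnier.T1_magic t1 t2 ht20 h11
    have h5 := Garnier.T3_f1 t1 t2 ht10 h01
    have h3 := Garnier.T3_prod t1 t2 ht10 h01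
    rw [e2] at h4
    have key : ((x (m+1) (l+1)).p1 *
          (t1 * (x (m+1) (l+1)).q2 + t2 * (x (m+1) (l+1)).q1 - t1 * t2) -
          ((x m l).k0 + 1) * t2) *
        ((x (m+1) l).p1 * (t1 * (x (m+1) l).q2 + t2 * (x (m+1) l).q1 - t1 * t2)) =
        ((x m l).p1 * (t1 * (x m l).q2 + t2 * (x m l).q1 - t1 * t2) -
          (x m l).k0 * t2) *
        ((x m (l+1)).p1 * (t1 * (x m (l+1)).q2 + t2 * (x m (l+1)).q1 - t1 * t2)) := by
      have hc : (x m (l+1)).q1 *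
          (t2 * (x m l).q1 + t1 * (x m l).q2 - t1 * t2) * (x m l).q1 ≠ 0 := by
        rw [← Garnier.f4_lin]
        exact mul_ne_zero (mul_ne_zero hq1y hF4) hq1
      apply mul_right_cancel₀ hc
      simp only [Garnier.f4_lin] at h2 h4 h5 h3
      linear_combination
        ((x (m+1) l).p1 *
            (t2 * (x (m+1) l).q1 + t1 * (x (m+1) l).q2 - t1 * t2) *
            (t2 * (x m l).q1 + t1 * (x m l).q2 - t1 * t2) * (x m l).q1) * h4
        - (Garnier.f1 (x m (l+1)) *
            (t2 * (x m (l+1)).q1 + t1 * (x m (l+1)).q2 - t1 * t2) *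
            (t2 * (x m l).q1 + t1 * (x m l).q2 - t1 * t2)) * h2
        - ((t2 * (x m (l+1)).q1 + t1 * (x m (l+1)).q2 - t1 * t2) *
            ((x m l).k0 * t2 * (x m l).q1 -
              Garnier.f1 (x m l) *
                (t2 * (x m l).q1 + t1 * (x m l).q2 - t1 * t2))) * h5
        - (((x m l).p1 * (t2 * (x m l).q1 + t1 * (x m l).q2 - t1 * t2) -
              (x m l).k0 * t2) *
            (t2 * (x m (l+1)).q1 + t1 * (x m (l+1)).q2 - t1 * t2) * (x m l).q1) * h3
    simp only [hu]
    rw [e1, e2, e3]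
    field_simp
    linear_combination key
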